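/- For every finite DTMDP with uniformisation rate q > 0, time bound t ≥ 0 and reward structure (c, f), there exists a counting deterministic (CD) scheduler d such that for every initial state s0, V(d, s0) equals the supremum over all history-dependent randomised (HR) schedulers σ of V(σ, s0); in particular, the supremum over HR schedulers is attained by a CD scheduler. -/

import Mathlib

open scoped BigOperators

namespace TR

variable {S A : Type} [Fintype S] [Fintype A] [DecidableEq S] [DecidableEq A]

/-- Poisson probabilities `φ_λ(i) = λ^i/i! · e^{−λ}`. -/
noncomputable def phi (lam : ℝ) (i : ℕ) : ℝ :=
  lam ^ i / (Nat.factorial i : ℝ) * Real.exp (-lam)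

/-- `ψ_λ(i) = 1 − Σ_{j=0}^{i} φ_λ(j)`. -/
noncomputable def psi (lam : ℝ) (i : ℕ) : ℝ :=
  1 - ∑ j ∈ Finset.range (i + 1), phi lam j

/-- Action `a` is enabled in state `s`. -/
def Enabled (P : S → A → S → ℝ) (s : S) (a : A) : Prop :=
  ∑ s', P s a s' = 1

/-- `P` is the transition function of a finite DTMDP. -/
def IsDTMDP (P : S → A → S → ℝ) : Prop :=
  (∀ s a s', 0 ≤ P s a s') ∧
  (∀ s a, (∑ s', P s a s') = 0 ∨ (∑ s', P s a s') = 1) ∧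
  (∀ s, ∃ a, Enabled P s a)

/-- History-dependent randomised scheduler.  A history is encoded as a pair of
a list of (state, action) pairs (most recent first) and the current state. -/
def IsHR (P : S → A → S → ℝ) (sch : List (S × A) × S → A → ℝ) : Prop :=
  (∀ h a, 0 ≤ sch h a) ∧ (∀ h, ∑ a, sch h a = 1) ∧
  (∀ h a, 0 < sch h a → Enabled P h.2 a)

/-- Probability of the path recorded in the given history (of length `n`,
starting at `s0`) under the HR scheduler `sch`. -/
noncomputable def hrHistProb (P : S → A → S → ℝ) (sch : List (S × A) × S → A → ℝ)
    (s0 : S) : ℕ → List (S × A) × S → ℝ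
  | 0, h => if h.1 = [] ∧ h.2 = s0 then 1 else 0
  | _ + 1, ([], _) => 0
  | n + 1, ((s, a) :: rest, s') =>
      hrHistProb P sch s0 n (rest, s) * sch (rest, s) a * P s a s'

/-- Transient probability `tprob^σ(s0, n, s)`: total probability of all paths of
length `n` from `s0` ending in `s`. -/
noncomputable def hrProb (P : S → A → S → ℝ) (sch : List (S × A) × S → A → ℝ)
    (s0 : S) (n : ℕ) (s : S) : ℝ :=
  ∑' l : List (S × A), hrHistProb P sch s0 n (l, s)

/-- Counting randomised scheduler. -/
def IsCR (P : S → A → S → ℝ) (sch : S → ℕ → A → ℝ) : Prop :=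
  (∀ s n a, 0 ≤ sch s n a) ∧ (∀ s n, ∑ a, sch s n a = 1) ∧
  (∀ s n a, 0 < sch s n a → Enabled P s a)

/-- Transient distribution of a CR scheduler. -/
noncomputable def crProb (P : S → A → S → ℝ) (sch : S → ℕ → A → ℝ) (s0 : S) :
    ℕ → S → ℝ
  | 0 => fun s => if s = s0 then 1 else 0
  | n + 1 => fun s' => ∑ s, crProb P sch s0 n s * ∑ a, sch s n a * P s a s'

/-- Counting deterministic scheduler. -/
def IsCD (P : S → A → S → ℝ) (d : S → ℕ → A) : Prop :=
  ∀ s n, Enabled P s (d s n)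

/-- Transient distribution of a CD scheduler. -/
noncomputable def cdProb (P : S → A → S → ℝ) (d : S → ℕ → A) (s0 : S) :
    ℕ → S → ℝ
  | 0 => fun s => if s = s0 then 1 else 0
  | n + 1 => fun s' => ∑ s, cdProb P d s0 n s * P s (d s n) s'

/-- The value `V = Σ_i [ φ_{qt}(i)·Σ_s p_i(s)·f(s) + ψ_{qt}(i)·Σ_s p_i(s)·c(s)/q ]`
of transient distributions `p` w.r.t. uniformisation rate `q`, time bound `t`
and rewards `(c, f)`. -/
noncomputable def value (q t : ℝ) (c f : S → ℝ) (p : ℕ → S → ℝ) : ℝ :=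
  ∑' i : ℕ, (phi (q * t) i * ∑ s, p i s * f s
    + psi (q * t) i * ∑ s, p i s * (c s / q))

/-- Value-iteration vectors of a CR scheduler: `crVI … k j` is `q_{k+1-j}`,
i.e. `crVI … k 0 = q_{k+1} ≡ 0` and `crVI … k (k+1) = q_0`. -/
noncomputable def crVI (P : S → A → S → ℝ) (sch : S → ℕ → A → ℝ)
    (q t : ℝ) (c f : S → ℝ) (k : ℕ) : ℕ → S → ℝ
  | 0 => fun _ => 0
  | j + 1 => fun s =>
      (∑ a, sch s (k - j) a * ∑ s', P s a s' * crVI P sch q t c f k j s')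
      + phi (q * t) (k - j) * f s + psi (q * t) (k - j) * (c s / q)

/-- Maximising value-iteration vectors: `maxVI … k j` is `q'_{k+1-j}`,
i.e. `maxVI … k 0 = q'_{k+1} ≡ 0` and `maxVI … k (k+1) = q'_0`. -/
noncomputable def maxVI (P : S → A → S → ℝ)
    (q t : ℝ) (c f : S → ℝ) (k : ℕ) : ℕ → S → ℝ
  | 0 => fun _ => 0
  | j + 1 => fun s =>
      sSup {x : ℝ | ∃ a, Enabled P s a ∧
        x = ∑ s', P s a s' * maxVI P q t c f k j s'}
      + phi (q * t) (k - j) * f s + psi (q * t) (k - j) * (c s / q)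

/-- Maximum of a real-valued function on a finite nonempty type. -/
noncomputable def maxOf [Nonempty S] (g : S → ℝ) : ℝ :=
  Finset.univ.sup' Finset.univ_nonempty g

/-- `k` is `ε`-sufficient: `Σ_{n=0}^{k} ψ_{qt}(n) > qt − ε·q/(2·max_s c(s))`
(dropped if `max_s c(s) = 0`) and `ψ_{qt}(k)·max_s f(s) < ε/2`. -/
def EpsSufficient [Nonempty S] (q t : ℝ) (c f : S → ℝ) (ε : ℝ) (k : ℕ) : Prop :=
  (maxOf c = 0 ∨
    (∑ n ∈ Finset.range (k + 1), psi (q * t) n) > q * t - ε * q / (2 * maxOf c)) ∧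
  psi (q * t) k * maxOf f < ε / 2

/-- `n`-step transition probabilities (matrix powers) of a stochastic matrix. -/
noncomputable def matPow (P : S → S → ℝ) : ℕ → S → S → ℝ
  | 0 => fun s s' => if s = s' then 1 else 0
  | n + 1 => fun s s' => ∑ s'', matPow P n s s'' * P s'' s'

/-- `part` is a partition of the finite state set `S`. -/
def IsPartition (part : Finset (Finset S)) : Prop :=
  (∀ z ∈ part, z.Nonempty) ∧ (∀ s : S, ∃ z ∈ part, s ∈ z) ∧
  (∀ z ∈ part, ∀ z' ∈ part, z ≠ z' → Disjoint z z')

/-- Abstraction DTMDP of a stochastic matrix w.r.t. a partition: states are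
blocks, actions are concrete states, `P̄(z, s, z') = Σ_{s' ∈ z'} P(s,s')` if
`s ∈ z` and `0` otherwise. -/
noncomputable def abst (P : S → S → ℝ) (part : Finset (Finset S)) :
    {z // z ∈ part} → S → {z // z ∈ part} → ℝ :=
  fun z s z' => if s ∈ z.1 then ∑ s' ∈ z'.1, P s s' else 0



section Aux1
set_option linter.unusedSectionVars false
lemma phi_nonneg {lam : ℝ} (h : 0 ≤ lam) (i : ℕ) : 0 ≤ phi lam i := by
  unfold phi
  positivity

lemma summable_phi (lam : ℝ) : Summable (phi lam) :=
  (Real.summable_pow_div_factorial lam).mul_right _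

lemma tsum_phi (lam : ℝ) : ∑' i, phi lam i = 1 := by
  unfold phi
  rw [tsum_mul_right]
  have h1 : ∑' i : ℕ, lam ^ i / (Nat.factorial i : ℝ) = Real.exp lam := by
    rw [Real.exp_eq_exp_ℝ, NormedSpace.exp_eq_tsum_div]
  rw [h1, Real.exp_neg, mul_inv_cancel₀ (Real.exp_ne_zero lam)]

lemma psi_eq (lam : ℝ) (n : ℕ) : psi lam n = ∑' i, phi lam (i + (n + 1)) := by
  have := (summable_phi lam).sum_add_tsum_nat_add (n + 1)
  rw [tsum_phi] at this
  unfold psi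
  linarith

lemma psi_nonneg {lam : ℝ} (h : 0 ≤ lam) (n : ℕ) : 0 ≤ psi lam n := by
  rw [psi_eq]
  exact tsum_nonneg fun i => phi_nonneg h _

lemma summable_phi_add (lam : ℝ) (k : ℕ) : Summable (fun i => phi lam (i + k)) :=
  (summable_nat_add_iff k).2 (summable_phi lam)

lemma psi_le {lam : ℝ} (h : 0 ≤ lam) (n : ℕ) :
    psi lam n ≤ lam ^ (n + 1) / (Nat.factorial (n + 1) : ℝ) := by
  rw [psi_eq]
  have key : ∀ i : ℕ, phi lam (i + (n + 1)) ≤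
      lam ^ (n + 1) / (Nat.factorial (n + 1) : ℝ) * phi lam i := by
    intro i
    unfold phi
    have hfac : ((Nat.factorial i : ℝ)) * (Nat.factorial (n+1) : ℝ) ≤
        (Nat.factorial (i + (n+1)) : ℝ) := by
      have h2 : Nat.factorial i * Nat.factorial (n+1) ≤ Nat.factorial (i + (n+1)) :=
        Nat.le_of_dvd (Nat.factorial_pos _)
          (Nat.factorial_mul_factorial_dvd_factorial_add i (n + 1))
      exact_mod_cast h2
    have hr : lam ^ (n + 1) / (Nat.factorial (n + 1) : ℝ) *
        (lam ^ i / (Nat.factorial i : ℝ) * Real.exp (-lam)) =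
        lam ^ (i + (n+1)) * Real.exp (-lam) /
          ((Nat.factorial i : ℝ) * (Nat.factorial (n+1) : ℝ)) := by
      rw [pow_add]; ring
    have hl : lam ^ (i + (n + 1)) / (Nat.factorial (i + (n+1)) : ℝ) * Real.exp (-lam) =
        lam ^ (i + (n+1)) * Real.exp (-lam) / (Nat.factorial (i + (n+1)) : ℝ) := by
      ring
    rw [hr, hl]
    apply div_le_div_of_nonneg_left _ _ hfac
    · positivity
    · positivity
  calc ∑' i, phi lam (i + (n + 1))
      ≤ ∑' i, lam ^ (n + 1) / (Nat.factorial (n + 1) : ℝ) * phi lam i := by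
        exact Summable.tsum_le_tsum key (summable_phi_add lam (n+1))
          ((summable_phi lam).mul_left _)
    _ = lam ^ (n + 1) / (Nat.factorial (n + 1) : ℝ) := by
        rw [tsum_mul_left, tsum_phi, mul_one]

lemma summable_psi {lam : ℝ} (h : 0 ≤ lam) : Summable (psi lam) := by
  apply Summable.of_nonneg_of_le (psi_nonneg h) (psi_le h)
  exact (summable_nat_add_iff 1).2 (Real.summable_pow_div_factorial lam)


end Aux1

section Aux2
set_option linter.unusedSectionVars false
variable {X : Type} [Fintype X] [DecidableEq X]
def lenFinset (X : Type) [Fintype X] [DecidableEq X] (n : ℕ) : Finset (List X) :=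
  (Finset.univ : Finset (Fin n → X)).image List.ofFn

lemma mem_lenFinset {n : ℕ} {l : List X} (h : l.length = n) : l ∈ lenFinset X n := by
  refine Finset.mem_image.2 ⟨fun i => l.get (Fin.cast h.symm i), Finset.mem_univ _, ?_⟩
  apply List.ext_getElem
  · simp [h]
  · intro i h1 h2
    simp [List.getElem_ofFn]

lemma summable_of_len (F : List X → ℝ) (n : ℕ) (h : ∀ l, l.length ≠ n → F l = 0) :
    Summable F :=
  summable_of_ne_finset_zero (s := lenFinset X n)
    (fun l hl => h l (fun hlen => hl (mem_lenFinset hlen)))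

lemma tsum_list_head (F : List X → ℝ) (hF0 : F [] = 0) (hsum : Summable F) :
    ∑' l, F l = ∑ x : X, ∑' l, F (x :: l) := by
  have hg : Function.Injective (fun p : X × List X => p.1 :: p.2) := by
    rintro ⟨a, b⟩ ⟨c, d⟩ h
    simpa [Prod.ext_iff] using h
  have hsupp : Function.support F ⊆ Set.range (fun p : X × List X => p.1 :: p.2) := by
    intro l hl
    cases l with
    | nil => exact absurd hF0 hl
    | cons x xs => exact ⟨(x, xs), rfl⟩
  have he := hg.tsum_eq (f := F) hsupp
  rw [← he]
  have hsum2 : Summable (F ∘ fun p : X × List X => p.1 :: p.2) :=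
    hsum.comp_injective hg
  rw [Summable.tsum_prod' (f := fun p : X × List X => F (p.1 :: p.2)) hsum2
    (fun x => hsum2.prod_factor x), tsum_fintype]

lemma tsum_list_last (F : List X → ℝ) (hF0 : F [] = 0) (hsum : Summable F) :
    ∑' l, F l = ∑ x : X, ∑' l, F (l ++ [x]) := by
  have hg : Function.Injective (fun p : X × List X => p.2 ++ [p.1]) := by
    rintro ⟨a, b⟩ ⟨c, d⟩ h
    simp only at h
    have := congrArg List.reverse h
    simp only [List.reverse_append, List.reverse_cons, List.reverse_nil,
      List.nil_append, List.cons_append] at this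
    simp only [List.cons.injEq] at this
    have h2 := congrArg List.reverse this.2
    simp only [List.reverse_reverse] at h2
    simp [Prod.ext_iff, this.1, h2]
  have hsupp : Function.support F ⊆ Set.range (fun p : X × List X => p.2 ++ [p.1]) := by
    intro l hl
    rcases List.eq_nil_or_concat l with h | ⟨l', x, rfl⟩
    · subst h; exact absurd hF0 hl
    · exact ⟨(x, l'), by simp⟩
  have he := hg.tsum_eq (f := F) hsupp
  rw [← he]
  have hsum2 : Summable (F ∘ fun p : X × List X => p.2 ++ [p.1]) :=
    hsum.comp_injective hg
  rw [Summable.tsum_prod' (f := fun p : X × List X => F (p.2 ++ [p.1])) hsum2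
    (fun x => hsum2.prod_factor x), tsum_fintype]


end Aux2

section Aux3
set_option linter.unusedSectionVars false
variable {S A : Type} [Fintype S] [Fintype A] [DecidableEq S] [DecidableEq A]
variable {P : S → A → S → ℝ} {sch : List (S × A) × S → A → ℝ} {s0 : S}

lemma hrHistProb_zero (h : List (S × A) × S) :
    hrHistProb P sch s0 0 h = if h.1 = [] ∧ h.2 = s0 then 1 else 0 := by
  rfl

lemma hrHistProb_nil (n : ℕ) (s : S) : hrHistProb P sch s0 (n + 1) ([], s) = 0 := rfl

lemma hrHistProb_cons (n : ℕ) (u : S) (a : A) (rest : List (S × A)) (s' : S) :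
    hrHistProb P sch s0 (n + 1) ((u, a) :: rest, s') =
      hrHistProb P sch s0 n (rest, u) * sch (rest, u) a * P u a s' := rfl

lemma hrHistProb_len : ∀ (n : ℕ) (l : List (S × A)) (s : S), l.length ≠ n →
    hrHistProb P sch s0 n (l, s) = 0 := by
  intro n
  induction n with
  | zero =>
    intro l s h
    rw [hrHistProb_zero]
    have : ¬(l = []) := fun hl => h (by simp [hl])
    simp [this]
  | succ n ih =>
    intro l s h
    cases l with
    | nil => exact hrHistProb_nil n s
    | cons x rest =>
      obtain ⟨u, a⟩ := x
      rw [hrHistProb_cons]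
      have : rest.length ≠ n := by simpa using h
      rw [ih rest u this, zero_mul, zero_mul]

lemma hrHistProb_nonneg (hs : ∀ h a, 0 ≤ sch h a) (hPn : ∀ s a s', 0 ≤ P s a s') :
    ∀ (n : ℕ) (l : List (S × A)) (s : S), 0 ≤ hrHistProb P sch s0 n (l, s) := by
  intro n
  induction n with
  | zero => intro l s; rw [hrHistProb_zero]; positivity
  | succ n ih =>
    intro l s
    cases l with
    | nil => rw [hrHistProb_nil]
    | cons x rest =>
      obtain ⟨u, a⟩ := x
      rw [hrHistProb_cons]
      exact mul_nonneg (mul_nonneg (ih rest u) (hs _ _)) (hPn _ _ _)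

/-- The initial state of the path recorded in a history. -/
def startOf (l : List (S × A)) (s : S) : S := (l.getLast?.map Prod.fst).getD s

lemma startOf_nil (s : S) : startOf ([] : List (S × A)) s = s := rfl

lemma startOf_cons (x : S × A) (l : List (S × A)) (s : S) :
    startOf (x :: l) s = startOf l x.1 := by
  cases l with
  | nil => rfl
  | cons y l' =>
    rcases hz : (y :: l').getLast? with _ | z
    · simp at hz
    · simp [startOf, List.getLast?_cons_cons, hz]

lemma hrHistProb_start : ∀ (n : ℕ) (l : List (S × A)) (s : S), startOf l s ≠ s0 →
    hrHistProb P sch s0 n (l, s) = 0 := by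
  intro n
  induction n with
  | zero =>
    intro l s h
    rw [hrHistProb_zero]
    cases l with
    | nil =>
      rw [startOf_nil] at h
      simp [h]
    | cons x rest => simp
  | succ n ih =>
    intro l s h
    cases l with
    | nil => exact hrHistProb_nil n s
    | cons x rest =>
      obtain ⟨u, a⟩ := x
      rw [hrHistProb_cons, ih rest u (by rwa [startOf_cons] at h), zero_mul, zero_mul]

lemma summable_hrHistProb_mul (n : ℕ) (s : S) (G : List (S × A) → ℝ) :
    Summable (fun l => hrHistProb P sch s0 n (l, s) * G l) :=
  summable_of_len _ n (fun l hl => by rw [hrHistProb_len n l s hl, zero_mul])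

lemma summable_hrHistProb (n : ℕ) (s : S) :
    Summable (fun l => hrHistProb P sch s0 n (l, s)) :=
  summable_of_len _ n (fun l hl => hrHistProb_len n l s hl)

lemma hrProb_zero (s : S) : hrProb P sch s0 0 s = if s = s0 then 1 else 0 := by
  unfold hrProb
  rw [tsum_eq_single ([] : List (S × A))
    (fun l hl => by rw [hrHistProb_zero]; simp [hl])]
  rw [hrHistProb_zero]
  simp

lemma hrProb_nonneg (hs : ∀ h a, 0 ≤ sch h a) (hPn : ∀ s a s', 0 ≤ P s a s')
    (n : ℕ) (s : S) : 0 ≤ hrProb P sch s0 n s :=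
  tsum_nonneg (fun l => hrHistProb_nonneg hs hPn n l s)

/-- The scheduler obtained from `sch` after it has taken action `a` in state `s0`. -/
noncomputable def shiftSch (sch : List (S × A) × S → A → ℝ) (s0 : S) (a : A) :
    List (S × A) × S → A → ℝ :=
  fun h => sch (h.1 ++ [(s0, a)], h.2)

lemma isHR_shift (hsch : IsHR P sch) (a : A) : IsHR P (shiftSch sch s0 a) :=
  ⟨fun h b => hsch.1 _ b, fun h => hsch.2.1 _,
   fun h b hb => hsch.2.2 (h.1 ++ [(s0, a)], h.2) b hb⟩

lemma hrHistProb_split :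
    ∀ (l : List (S × A)) (n : ℕ) (u0 : S) (a0 : A) (s : S),
      hrHistProb P sch s0 (n + 1) (l ++ [(u0, a0)], s) =
        if u0 = s0 then
          sch ([], s0) a0 * P s0 a0 (startOf l s) *
            hrHistProb P (shiftSch sch s0 a0) (startOf l s) n (l, s)
        else 0 := by
  intro l
  induction l with
  | nil =>
    intro n u0 a0 s
    rw [List.nil_append, startOf_nil, hrHistProb_cons]
    cases n with
    | zero =>
      rw [hrHistProb_zero, hrHistProb_zero]
      simp only [List.nil_eq, true_and, and_true]
      by_cases h : u0 = s0
      · subst h; simp [mul_comm]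
      · simp [h]
    | succ m =>
      rw [hrHistProb_nil, hrHistProb_nil]
      simp
  | cons x rest ih =>
    intro n u0 a0 s
    obtain ⟨v, b⟩ := x
    cases n with
    | zero =>
      rw [List.cons_append, hrHistProb_cons]
      have h1 : hrHistProb P sch s0 0 (rest ++ [(u0, a0)], v) = 0 := by
        rw [hrHistProb_zero]; simp
      have h2 : hrHistProb P (shiftSch sch s0 a0) (startOf ((v, b) :: rest) s) 0
          ((v, b) :: rest, s) = 0 := by
        rw [hrHistProb_zero]; simp
      rw [h1, h2, zero_mul, zero_mul, mul_zero]
      simp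
    | succ m =>
      rw [List.cons_append, hrHistProb_cons, ih m u0 a0 v, startOf_cons]
      by_cases h : u0 = s0
      · subst h
        rw [if_pos rfl, if_pos rfl, hrHistProb_cons]
        have : shiftSch sch u0 a0 (rest, v) b = sch (rest ++ [(u0, a0)], v) b := rfl
        rw [this]
        ring
      · rw [if_neg h, if_neg h, zero_mul, zero_mul]

end Aux3

section Aux4
set_option linter.unusedSectionVars false
set_option maxHeartbeats 1000000
variable {S A : Type} [Fintype S] [Fintype A] [DecidableEq S] [DecidableEq A]
variable {P : S → A → S → ℝ} {sch : List (S × A) × S → A → ℝ} {s0 : S}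

lemma summable_hrHistProb_mul₂ (n : ℕ) (s : S) (G : List (S × A) → ℝ)
    (H : List (S × A) → ℝ) :
    Summable (fun l => hrHistProb P sch s0 n (l, s) * G l * H l) :=
  summable_of_len _ n (fun l hl => by rw [hrHistProb_len n l s hl, zero_mul, zero_mul])

lemma summable_mul_hrHistProb (n : ℕ) (s : S) (G : List (S × A) → ℝ) :
    Summable (fun l => G l * hrHistProb P sch s0 n (l, s)) :=
  summable_of_len _ n (fun l hl => by rw [hrHistProb_len n l s hl, mul_zero])

lemma hrProb_succ (n : ℕ) (s : S) :
    hrProb P sch s0 (n + 1) s =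
      ∑ a, sch ([], s0) a * ∑ s1, P s0 a s1 * hrProb P (shiftSch sch s0 a) s1 n s := by
  have step1 : hrProb P sch s0 (n + 1) s =
      ∑ x : S × A, ∑' l, hrHistProb P sch s0 (n + 1) (l ++ [x], s) :=
    tsum_list_last _ (hrHistProb_nil n s) (summable_hrHistProb (n + 1) s)
  rw [step1, Fintype.sum_prod_type]
  have step2 : ∀ u0 a0, (∑' l, hrHistProb P sch s0 (n + 1) (l ++ [(u0, a0)], s)) =
      if u0 = s0 then
        sch ([], s0) a0 * ∑' l, P s0 a0 (startOf l s) *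
          hrHistProb P (shiftSch sch s0 a0) (startOf l s) n (l, s)
      else 0 := by
    intro u0 a0
    rw [tsum_congr (fun l => hrHistProb_split l n u0 a0 s)]
    by_cases h : u0 = s0
    · subst h
      simp only [eq_self_iff_true, if_true]
      rw [← tsum_mul_left]
      exact tsum_congr (fun l => by ring)
    · simp [h]
  have step3 : ∀ a0, (∑' l, P s0 a0 (startOf l s) *
      hrHistProb P (shiftSch sch s0 a0) (startOf l s) n (l, s)) =
      ∑ s1, P s0 a0 s1 * hrProb P (shiftSch sch s0 a0) s1 n s := by
    intro a0
    have hrw : ∀ s1, P s0 a0 s1 * hrProb P (shiftSch sch s0 a0) s1 n s =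
        ∑' l, P s0 a0 s1 * hrHistProb P (shiftSch sch s0 a0) s1 n (l, s) := by
      intro s1
      unfold hrProb
      rw [tsum_mul_left]
    rw [Finset.sum_congr rfl (fun s1 _ => hrw s1), ← Summable.tsum_finsetSum
      (fun s1 _ => summable_mul_hrHistProb n s (fun _ => P s0 a0 s1))]
    refine (tsum_congr (fun l => ?_)).symm
    rw [Finset.sum_eq_single (startOf l s)]
    · intro s1 _ hne
      rw [hrHistProb_start n l s (Ne.symm hne), mul_zero]
    · intro hmem
      exact absurd (Finset.mem_univ _) hmem
  calc ∑ u0, ∑ a0, ∑' l, hrHistProb P sch s0 (n + 1) (l ++ [(u0, a0)], s)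
      = ∑ u0, if u0 = s0 then (∑ a0, sch ([], s0) a0 * ∑' l, P s0 a0 (startOf l s) *
          hrHistProb P (shiftSch sch s0 a0) (startOf l s) n (l, s)) else 0 := by
        refine Finset.sum_congr rfl (fun u0 _ => ?_)
        rw [Finset.sum_congr rfl (fun a0 _ => step2 u0 a0)]
        by_cases h : u0 = s0 <;> simp [h]
    _ = ∑ a0, sch ([], s0) a0 * ∑' l, P s0 a0 (startOf l s) *
          hrHistProb P (shiftSch sch s0 a0) (startOf l s) n (l, s) := by
        rw [Finset.sum_ite_eq' Finset.univ s0]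
        simp
    _ = ∑ a, sch ([], s0) a * ∑ s1, P s0 a s1 * hrProb P (shiftSch sch s0 a) s1 n s := by
        exact Finset.sum_congr rfl (fun a0 _ => by rw [step3 a0])

lemma sum_sch_P_eq_one (hsch : IsHR P sch) (hl : List (S × A)) (u : S) :
    ∑ a, sch (hl, u) a * ∑ s', P u a s' = 1 := by
  have key : ∀ a, sch (hl, u) a * ∑ s', P u a s' = sch (hl, u) a := by
    intro a
    rcases eq_or_lt_of_le (hsch.1 (hl, u) a) with h0 | h0
    · rw [← h0, zero_mul]
    · rw [show (∑ s', P u a s') = 1 from hsch.2.2 (hl, u) a h0, mul_one]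
  rw [Finset.sum_congr rfl (fun a _ => key a), hsch.2.1 (hl, u)]

lemma hrProb_mass (hsch : IsHR P sch) : ∀ n, ∑ s, hrProb P sch s0 n s = 1 := by
  intro n
  induction n with
  | zero => simp [hrProb_zero]
  | succ n ih =>
    have hsplit : ∀ s : S, hrProb P sch s0 (n + 1) s =
        ∑ x : S × A, ∑' l, hrHistProb P sch s0 n (l, x.1) * sch (l, x.1) x.2 *
          P x.1 x.2 s := by
      intro s
      rw [show hrProb P sch s0 (n+1) s =
        ∑ x : S × A, ∑' l, hrHistProb P sch s0 (n + 1) (x :: l, s) from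
        tsum_list_head _ (hrHistProb_nil n s) (summable_hrHistProb (n + 1) s)]
      refine Finset.sum_congr rfl (fun x _ => tsum_congr (fun l => ?_))
      obtain ⟨u, a⟩ := x
      exact hrHistProb_cons n u a l s
    calc ∑ s, hrProb P sch s0 (n + 1) s
        = ∑ s, ∑ x : S × A, ∑' l, hrHistProb P sch s0 n (l, x.1) * sch (l, x.1) x.2 *
            P x.1 x.2 s := Finset.sum_congr rfl (fun s _ => hsplit s)
      _ = ∑' l, ∑ s, ∑ x : S × A, hrHistProb P sch s0 n (l, x.1) * sch (l, x.1) x.2 *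
            P x.1 x.2 s := by
          have h1 : ∀ s : S, (∑ x : S × A, ∑' l, hrHistProb P sch s0 n (l, x.1) *
              sch (l, x.1) x.2 * P x.1 x.2 s) =
              ∑' l, ∑ x : S × A, hrHistProb P sch s0 n (l, x.1) * sch (l, x.1) x.2 *
                P x.1 x.2 s :=
            fun s => (Summable.tsum_finsetSum (fun x _ => summable_hrHistProb_mul₂ n x.1 _ _)).symm
          rw [Finset.sum_congr rfl (fun s _ => h1 s)]
          exact (Summable.tsum_finsetSum (fun s _ => summable_sum
            (fun x _ => summable_hrHistProb_mul₂ n x.1 _ _))).symm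
      _ = ∑' l, ∑ u, hrHistProb P sch s0 n (l, u) := by
          refine tsum_congr (fun l => ?_)
          rw [Finset.sum_comm, Fintype.sum_prod_type]
          refine Finset.sum_congr rfl (fun u _ => ?_)
          have e1 : ∀ a : A, (∑ s, hrHistProb P sch s0 n (l, u) * sch (l, u) a * P u a s)
              = hrHistProb P sch s0 n (l, u) * (sch (l, u) a * ∑ s, P u a s) := by
            intro a
            rw [← Finset.mul_sum, mul_assoc]
          rw [Finset.sum_congr rfl (fun a _ => e1 a), ← Finset.mul_sum,
            sum_sch_P_eq_one hsch l u, mul_one]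
      _ = ∑ u, hrProb P sch s0 n u :=
          Summable.tsum_finsetSum (fun u _ => summable_hrHistProb n u)
      _ = 1 := ih

end Aux4

section Aux5
set_option linter.unusedSectionVars false
set_option maxHeartbeats 1000000
variable {S A : Type} [Fintype S] [Fintype A] [DecidableEq S] [DecidableEq A]

/-- The stage reward at step `i` in state `s`. -/
noncomputable def gr (q t : ℝ) (c f : S → ℝ) (i : ℕ) (s : S) : ℝ :=
  phi (q * t) i * f s + psi (q * t) i * (c s / q)

lemma value_eq_tsum (q t : ℝ) (c f : S → ℝ) (p : ℕ → S → ℝ) :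
    value q t c f p = ∑' i, ∑ s, p i s * gr q t c f i s := by
  refine tsum_congr (fun i => ?_)
  unfold gr
  rw [Finset.mul_sum, Finset.mul_sum, ← Finset.sum_add_distrib]
  exact Finset.sum_congr rfl (fun s _ => by ring)

variable [Nonempty S]

lemma le_maxOf (g : S → ℝ) (s : S) : g s ≤ maxOf g :=
  Finset.le_sup' g (Finset.mem_univ s)

lemma maxOf_nonneg {g : S → ℝ} (hg : ∀ s, 0 ≤ g s) : 0 ≤ maxOf g :=
  le_trans (hg (Classical.arbitrary S)) (le_maxOf g _)

/-- Upper bound for the stage reward at step `i`. -/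
noncomputable def gbd (q t : ℝ) (c f : S → ℝ) (i : ℕ) : ℝ :=
  phi (q * t) i * maxOf f + psi (q * t) i * (maxOf c / q)

variable {q t : ℝ} {c f : S → ℝ}

lemma gr_nonneg (hq : 0 < q) (ht : 0 ≤ t) (hc : ∀ s, 0 ≤ c s) (hf : ∀ s, 0 ≤ f s)
    (i : ℕ) (s : S) : 0 ≤ gr q t c f i s := by
  have hlam : 0 ≤ q * t := mul_nonneg hq.le ht
  exact add_nonneg (mul_nonneg (phi_nonneg hlam i) (hf s))
    (mul_nonneg (psi_nonneg hlam i) (div_nonneg (hc s) hq.le))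

lemma gr_le_gbd (hq : 0 < q) (ht : 0 ≤ t) (hc : ∀ s, 0 ≤ c s) (hf : ∀ s, 0 ≤ f s)
    (i : ℕ) (s : S) : gr q t c f i s ≤ gbd q t c f i := by
  have hlam : 0 ≤ q * t := mul_nonneg hq.le ht
  refine add_le_add (mul_le_mul_of_nonneg_left (le_maxOf f s) (phi_nonneg hlam i))
    (mul_le_mul_of_nonneg_left ?_ (psi_nonneg hlam i))
  exact (div_le_div_iff_of_pos_right hq).2 (le_maxOf c s)

lemma gbd_nonneg (hq : 0 < q) (ht : 0 ≤ t) (hc : ∀ s, 0 ≤ c s) (hf : ∀ s, 0 ≤ f s)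
    (i : ℕ) : 0 ≤ gbd q t c f i := by
  have hlam : 0 ≤ q * t := mul_nonneg hq.le ht
  exact add_nonneg (mul_nonneg (phi_nonneg hlam i) (maxOf_nonneg hf))
    (mul_nonneg (psi_nonneg hlam i) (div_nonneg (maxOf_nonneg hc) hq.le))

lemma summable_gbd (hq : 0 < q) (ht : 0 ≤ t) : Summable (gbd q t c f) := by
  have hlam : 0 ≤ q * t := mul_nonneg hq.le ht
  exact ((summable_phi _).mul_right _).add ((summable_psi hlam).mul_right _)

lemma summable_gbd_add (hq : 0 < q) (ht : 0 ≤ t) (n : ℕ) :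
    Summable (fun i => gbd q t c f (n + i)) := by
  have h := (summable_nat_add_iff (f := gbd q t c f) n).2 (summable_gbd hq ht)
  exact h.congr (fun i => by rw [add_comm])

/-- Total remaining reward bound from step `n` on. -/
noncomputable def tailB (q t : ℝ) (c f : S → ℝ) (n : ℕ) : ℝ :=
  ∑' i, gbd q t c f (n + i)

lemma tailB_nonneg (hq : 0 < q) (ht : 0 ≤ t) (hc : ∀ s, 0 ≤ c s) (hf : ∀ s, 0 ≤ f s)
    (n : ℕ) : 0 ≤ tailB q t c f n :=
  tsum_nonneg (fun i => gbd_nonneg hq ht hc hf _)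

lemma tailB_tendsto : Filter.Tendsto (tailB q t c f) Filter.atTop (nhds 0) := by
  have h := tendsto_sum_nat_add (gbd q t c f)
  refine h.congr (fun n => ?_)
  exact tsum_congr (fun k => by rw [add_comm])

lemma stage_le (hq : 0 < q) (ht : 0 ≤ t) (hc : ∀ s, 0 ≤ c s) (hf : ∀ s, 0 ≤ f s)
    {p : S → ℝ} (hp0 : ∀ s, 0 ≤ p s) (hp1 : ∑ s, p s ≤ 1) (i : ℕ) :
    ∑ s, p s * gr q t c f i s ≤ gbd q t c f i :=
  calc ∑ s, p s * gr q t c f i s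
      ≤ ∑ s, p s * gbd q t c f i := Finset.sum_le_sum (fun s _ =>
        mul_le_mul_of_nonneg_left (gr_le_gbd hq ht hc hf i s) (hp0 s))
    _ = (∑ s, p s) * gbd q t c f i := (Finset.sum_mul _ _ _).symm
    _ ≤ 1 * gbd q t c f i :=
        mul_le_mul_of_nonneg_right hp1 (gbd_nonneg hq ht hc hf i)
    _ = gbd q t c f i := one_mul _

/-- Transient distribution of a CD scheduler started at state `s` at time `n`. -/
noncomputable def cdQ (P : S → A → S → ℝ) (d : S → ℕ → A) (n : ℕ) (s : S) :
    ℕ → S → ℝ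
  | 0 => fun s' => if s' = s then 1 else 0
  | i + 1 => fun s' => ∑ u, cdQ P d n s i u * P u (d u (n + i)) s'

variable {P : S → A → S → ℝ} {d : S → ℕ → A}

lemma cdProb_eq_cdQ (s0 : S) : ∀ i, cdProb P d s0 i = cdQ P d 0 s0 i := by
  intro i
  induction i with
  | zero => rfl
  | succ i ih =>
    funext s'
    show (∑ s, cdProb P d s0 i s * P s (d s i) s') = ∑ u, cdQ P d 0 s0 i u *
      P u (d u (0 + i)) s'
    rw [ih]
    simp [Nat.zero_add]

lemma cdQ_nonneg (hPn : ∀ s a s', 0 ≤ P s a s') (n : ℕ) (s : S) :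
    ∀ i s', 0 ≤ cdQ P d n s i s' := by
  intro i
  induction i with
  | zero => intro s'; dsimp [cdQ]; positivity
  | succ i ih =>
    intro s'
    exact Finset.sum_nonneg (fun u _ => mul_nonneg (ih u) (hPn _ _ _))

lemma cdQ_mass (hP : IsDTMDP P) (hd : IsCD P d) (n : ℕ) (s : S) :
    ∀ i, ∑ s', cdQ P d n s i s' = 1 := by
  intro i
  induction i with
  | zero => simp [cdQ]
  | succ i ih =>
    show (∑ s', ∑ u, cdQ P d n s i u * P u (d u (n + i)) s') = 1
    rw [Finset.sum_comm]
    calc ∑ u, ∑ s', cdQ P d n s i u * P u (d u (n + i)) s'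
        = ∑ u, cdQ P d n s i u * ∑ s', P u (d u (n + i)) s' := by
          exact Finset.sum_congr rfl (fun u _ => (Finset.mul_sum _ _ _).symm)
      _ = ∑ u, cdQ P d n s i u := by
          refine Finset.sum_congr rfl (fun u _ => ?_)
          rw [show (∑ s', P u (d u (n + i)) s') = 1 from hd u (n + i), mul_one]
      _ = 1 := ih

lemma cdQ_first (n : ℕ) (s : S) : ∀ (i : ℕ) (s'' : S),
    cdQ P d n s (i + 1) s'' = ∑ s', P s (d s n) s' * cdQ P d (n + 1) s' i s'' := by
  intro i
  induction i with
  | zero =>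
    intro s''
    show (∑ u, cdQ P d n s 0 u * P u (d u (n + 0)) s'') = _
    simp [cdQ]
  | succ i ih =>
    intro s''
    show (∑ u, cdQ P d n s (i + 1) u * P u (d u (n + (i + 1))) s'') = _
    calc ∑ u, cdQ P d n s (i + 1) u * P u (d u (n + (i + 1))) s''
        = ∑ u, (∑ s', P s (d s n) s' * cdQ P d (n + 1) s' i u) *
            P u (d u (n + (i + 1))) s'' := by
          exact Finset.sum_congr rfl (fun u _ => by rw [ih u])
      _ = ∑ s', P s (d s n) s' * ∑ u, cdQ P d (n + 1) s' i u *
            P u (d u ((n + 1) + i)) s'' := by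
          simp only [Finset.sum_mul, Finset.mul_sum]
          rw [Finset.sum_comm]
          refine Finset.sum_congr rfl (fun s' _ => Finset.sum_congr rfl (fun u _ => ?_))
          rw [show n + (i + 1) = (n + 1) + i from by ring]
          ring
      _ = ∑ s', P s (d s n) s' * cdQ P d (n + 1) s' (i + 1) s'' := rfl

/-- Value of the CD scheduler `d` started at state `s` at time `n`. -/
noncomputable def cdVal (P : S → A → S → ℝ) (d : S → ℕ → A) (q t : ℝ)
    (c f : S → ℝ) (n : ℕ) (s : S) : ℝ :=
  ∑' i, ∑ s', cdQ P d n s i s' * gr q t c f (n + i) s'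

lemma summable_cdVal (hP : IsDTMDP P) (hd : IsCD P d) (hq : 0 < q) (ht : 0 ≤ t)
    (hc : ∀ s, 0 ≤ c s) (hf : ∀ s, 0 ≤ f s) (n : ℕ) (s : S) :
    Summable (fun i => ∑ s', cdQ P d n s i s' * gr q t c f (n + i) s') := by
  refine Summable.of_nonneg_of_le (fun i => Finset.sum_nonneg (fun s' _ =>
    mul_nonneg (cdQ_nonneg hP.1 n s i s') (gr_nonneg hq ht hc hf _ s')))
    (fun i => stage_le hq ht hc hf (fun s' => cdQ_nonneg hP.1 n s i s')
      (cdQ_mass hP hd n s i).le _) (summable_gbd_add hq ht n)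

lemma cdVal_nonneg (hP : IsDTMDP P) (hq : 0 < q) (ht : 0 ≤ t)
    (hc : ∀ s, 0 ≤ c s) (hf : ∀ s, 0 ≤ f s) (n : ℕ) (s : S) :
    0 ≤ cdVal P d q t c f n s :=
  tsum_nonneg (fun i => Finset.sum_nonneg (fun s' _ =>
    mul_nonneg (cdQ_nonneg hP.1 n s i s') (gr_nonneg hq ht hc hf _ s')))

lemma cdVal_rec (hP : IsDTMDP P) (hd : IsCD P d) (hq : 0 < q) (ht : 0 ≤ t)
    (hc : ∀ s, 0 ≤ c s) (hf : ∀ s, 0 ≤ f s) (n : ℕ) (s : S) :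
    cdVal P d q t c f n s = gr q t c f n s +
      ∑ s', P s (d s n) s' * cdVal P d q t c f (n + 1) s' := by
  unfold cdVal
  rw [Summable.tsum_eq_zero_add (summable_cdVal hP hd hq ht hc hf n s)]
  congr 1
  · show (∑ s', (if s' = s then (1:ℝ) else 0) * gr q t c f (n + 0) s') = _
    simp only [ite_mul, one_mul, zero_mul]
    rw [Finset.sum_ite_eq' Finset.univ s (fun s' => gr q t c f (n + 0) s')]
    simp
  · calc ∑' i, ∑ s'', cdQ P d n s (i + 1) s'' * gr q t c f (n + (i + 1)) s''
        = ∑' i, ∑ s', P s (d s n) s' *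
            ∑ s'', cdQ P d (n + 1) s' i s'' * gr q t c f ((n + 1) + i) s'' := by
          refine tsum_congr (fun i => ?_)
          rw [Finset.sum_congr rfl (fun s'' _ => by rw [cdQ_first n s i s''])]
          simp only [Finset.sum_mul, Finset.mul_sum]
          rw [Finset.sum_comm]
          refine Finset.sum_congr rfl (fun s' _ => Finset.sum_congr rfl (fun s'' _ => ?_))
          rw [show n + (i + 1) = (n + 1) + i from by ring]
          ring
      _ = ∑ s', P s (d s n) s' * cdVal P d q t c f (n + 1) s' := by
          rw [Summable.tsum_finsetSum (fun s' _ =>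
            (summable_cdVal hP hd hq ht hc hf (n + 1) s').mul_left _)]
          exact Finset.sum_congr rfl (fun s' _ => tsum_mul_left)

end Aux5

section Aux6
set_option linter.unusedSectionVars false
set_option maxHeartbeats 1000000
variable {S A : Type} [Fintype S] [Fintype A] [DecidableEq S] [DecidableEq A]
variable [Nonempty S]
variable {P : S → A → S → ℝ} {q t : ℝ} {c f : S → ℝ}

/-- Value of the HR scheduler `sch` started at `s0` with time offset `n`. -/
noncomputable def hrVal (P : S → A → S → ℝ) (sch : List (S × A) × S → A → ℝ)
    (q t : ℝ) (c f : S → ℝ) (s0 : S) (n : ℕ) : ℝ :=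
  ∑' i, ∑ s, hrProb P sch s0 i s * gr q t c f (n + i) s

lemma summable_hrVal {sch : List (S × A) × S → A → ℝ} (hP : IsDTMDP P)
    (hsch : IsHR P sch) (hq : 0 < q) (ht : 0 ≤ t) (hc : ∀ s, 0 ≤ c s)
    (hf : ∀ s, 0 ≤ f s) (s0 : S) (n : ℕ) :
    Summable (fun i => ∑ s, hrProb P sch s0 i s * gr q t c f (n + i) s) :=
  Summable.of_nonneg_of_le
    (fun i => Finset.sum_nonneg (fun s _ => mul_nonneg
      (hrProb_nonneg hsch.1 hP.1 i s) (gr_nonneg hq ht hc hf _ s)))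
    (fun i => stage_le hq ht hc hf (fun s => hrProb_nonneg hsch.1 hP.1 i s)
      (hrProb_mass hsch i).le _)
    (summable_gbd_add hq ht n)

lemma hrVal_le_tailB {sch : List (S × A) × S → A → ℝ} (hP : IsDTMDP P)
    (hsch : IsHR P sch) (hq : 0 < q) (ht : 0 ≤ t) (hc : ∀ s, 0 ≤ c s)
    (hf : ∀ s, 0 ≤ f s) (s0 : S) (n : ℕ) :
    hrVal P sch q t c f s0 n ≤ tailB q t c f n :=
  Summable.tsum_le_tsum
    (fun i => stage_le hq ht hc hf (fun s => hrProb_nonneg hsch.1 hP.1 i s)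
      (hrProb_mass hsch i).le _)
    (summable_hrVal hP hsch hq ht hc hf s0 n) (summable_gbd_add hq ht n)

lemma hrVal_nonneg {sch : List (S × A) × S → A → ℝ} (hP : IsDTMDP P)
    (hsch : IsHR P sch) (hq : 0 < q) (ht : 0 ≤ t) (hc : ∀ s, 0 ≤ c s)
    (hf : ∀ s, 0 ≤ f s) (s0 : S) (n : ℕ) : 0 ≤ hrVal P sch q t c f s0 n :=
  tsum_nonneg (fun i => Finset.sum_nonneg (fun s _ => mul_nonneg
    (hrProb_nonneg hsch.1 hP.1 i s) (gr_nonneg hq ht hc hf _ s)))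

lemma hrVal_rec {sch : List (S × A) × S → A → ℝ} (hP : IsDTMDP P)
    (hsch : IsHR P sch) (hq : 0 < q) (ht : 0 ≤ t) (hc : ∀ s, 0 ≤ c s)
    (hf : ∀ s, 0 ≤ f s) (s0 : S) (n : ℕ) :
    hrVal P sch q t c f s0 n = gr q t c f n s0 +
      ∑ a, sch ([], s0) a * ∑ s1, P s0 a s1 *
        hrVal P (shiftSch sch s0 a) q t c f s1 (n + 1) := by
  unfold hrVal
  rw [Summable.tsum_eq_zero_add (summable_hrVal hP hsch hq ht hc hf s0 n)]
  congr 1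
  · rw [Finset.sum_congr rfl (fun s _ => by rw [hrProb_zero])]
    simp only [ite_mul, one_mul, zero_mul]
    rw [Finset.sum_ite_eq' Finset.univ s0 (fun s => gr q t c f (n + 0) s)]
    simp
  · calc ∑' i, ∑ s, hrProb P sch s0 (i + 1) s * gr q t c f (n + (i + 1)) s
        = ∑' i, ∑ a, sch ([], s0) a * ∑ s1, P s0 a s1 *
            ∑ s, hrProb P (shiftSch sch s0 a) s1 i s * gr q t c f ((n + 1) + i) s := by
          refine tsum_congr (fun i => ?_)
          rw [Finset.sum_congr rfl (fun s _ => by rw [hrProb_succ i s])]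
          simp only [Finset.sum_mul, Finset.mul_sum]
          rw [Finset.sum_comm]
          refine Finset.sum_congr rfl (fun a _ => ?_)
          rw [Finset.sum_comm]
          refine Finset.sum_congr rfl (fun s1 _ => Finset.sum_congr rfl (fun s _ => ?_))
          rw [show n + (i + 1) = (n + 1) + i from by ring]
          ring
      _ = ∑ a, sch ([], s0) a * ∑ s1, P s0 a s1 *
            hrVal P (shiftSch sch s0 a) q t c f s1 (n + 1) := by
          rw [Summable.tsum_finsetSum (fun a _ => ?_)]
          · refine Finset.sum_congr rfl (fun a _ => ?_)
            rw [tsum_mul_left]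
            congr 1
            rw [Summable.tsum_finsetSum (fun s1 _ =>
              (summable_hrVal hP (isHR_shift hsch a) hq ht hc hf s1 (n + 1)).mul_left _)]
            exact Finset.sum_congr rfl (fun s1 _ => tsum_mul_left)
          · exact (summable_sum (fun s1 _ =>
              (summable_hrVal hP (isHR_shift hsch a) hq ht hc hf s1 (n + 1)).mul_left
                (P s0 a s1))).mul_left _

/-- The optimal value over HR schedulers from state `s` with time offset `n`. -/
noncomputable def UU (P : S → A → S → ℝ) (q t : ℝ) (c f : S → ℝ)
    (n : ℕ) (s : S) : ℝ :=
  sSup {x : ℝ | ∃ sch, IsHR P sch ∧ x = hrVal P sch q t c f s n}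

lemma exists_isHR (hP : IsDTMDP P) :
    ∃ sch : List (S × A) × S → A → ℝ, IsHR P sch := by
  classical
  refine ⟨fun h a => if a = (hP.2.2 h.2).choose then 1 else 0, fun h a => ?_, fun h => ?_,
    fun h a ha => ?_⟩
  · dsimp only; split <;> norm_num
  · simp
  · by_cases hh : a = (hP.2.2 h.2).choose
    · rw [hh]; exact (hP.2.2 h.2).choose_spec
    · simp [hh] at ha

lemma UU_set_nonempty (hP : IsDTMDP P) (n : ℕ) (s : S) :
    {x : ℝ | ∃ sch, IsHR P sch ∧ x = hrVal P sch q t c f s n}.Nonempty := by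
  obtain ⟨sch, hsch⟩ := exists_isHR hP
  exact ⟨hrVal P sch q t c f s n, sch, hsch, rfl⟩

lemma UU_set_bdd (hP : IsDTMDP P) (hq : 0 < q) (ht : 0 ≤ t) (hc : ∀ s, 0 ≤ c s)
    (hf : ∀ s, 0 ≤ f s) (n : ℕ) (s : S) :
    BddAbove {x : ℝ | ∃ sch, IsHR P sch ∧ x = hrVal P sch q t c f s n} := by
  refine ⟨tailB q t c f n, ?_⟩
  rintro x ⟨sch, hsch, rfl⟩
  exact hrVal_le_tailB hP hsch hq ht hc hf s n

lemma hrVal_le_UU {sch : List (S × A) × S → A → ℝ} (hP : IsDTMDP P)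
    (hsch : IsHR P sch) (hq : 0 < q) (ht : 0 ≤ t) (hc : ∀ s, 0 ≤ c s)
    (hf : ∀ s, 0 ≤ f s) (s : S) (n : ℕ) :
    hrVal P sch q t c f s n ≤ UU P q t c f n s :=
  le_csSup (UU_set_bdd hP hq ht hc hf n s) ⟨sch, hsch, rfl⟩

lemma UU_le_tailB (hP : IsDTMDP P) (hq : 0 < q) (ht : 0 ≤ t) (hc : ∀ s, 0 ≤ c s)
    (hf : ∀ s, 0 ≤ f s) (n : ℕ) (s : S) : UU P q t c f n s ≤ tailB q t c f n := by
  refine csSup_le (UU_set_nonempty hP n s) ?_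
  rintro x ⟨sch, hsch, rfl⟩
  exact hrVal_le_tailB hP hsch hq ht hc hf s n

lemma exists_dstar (hP : IsDTMDP P) (q t : ℝ) (c f : S → ℝ) :
    ∃ d : S → ℕ → A, IsCD P d ∧ ∀ s n b, Enabled P s b →
      (∑ s1, P s b s1 * UU P q t c f (n + 1) s1) ≤
        ∑ s1, P s (d s n) s1 * UU P q t c f (n + 1) s1 := by
  classical
  have key : ∀ (s : S) (n : ℕ), ∃ a, Enabled P s a ∧ ∀ b, Enabled P s b →
      (∑ s1, P s b s1 * UU P q t c f (n + 1) s1) ≤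
        ∑ s1, P s a s1 * UU P q t c f (n + 1) s1 := by
    intro s n
    obtain ⟨a, ha, hmax⟩ := Finset.exists_max_image
      (Finset.univ.filter (fun a => Enabled P s a))
      (fun a => ∑ s1, P s a s1 * UU P q t c f (n + 1) s1)
      ⟨(hP.2.2 s).choose, Finset.mem_filter.2 ⟨Finset.mem_univ _, (hP.2.2 s).choose_spec⟩⟩
    exact ⟨a, (Finset.mem_filter.1 ha).2,
      fun b hb => hmax b (Finset.mem_filter.2 ⟨Finset.mem_univ _, hb⟩)⟩
  exact ⟨fun s n => (key s n).choose, fun s n => (key s n).choose_spec.1,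
    fun s n => (key s n).choose_spec.2⟩

lemma UU_bellman_le {d : S → ℕ → A} (hP : IsDTMDP P) (hq : 0 < q) (ht : 0 ≤ t)
    (hc : ∀ s, 0 ≤ c s) (hf : ∀ s, 0 ≤ f s)
    (hmax : ∀ s n b, Enabled P s b →
      (∑ s1, P s b s1 * UU P q t c f (n + 1) s1) ≤
        ∑ s1, P s (d s n) s1 * UU P q t c f (n + 1) s1)
    (n : ℕ) (s : S) :
    UU P q t c f n s ≤ gr q t c f n s +
      ∑ s1, P s (d s n) s1 * UU P q t c f (n + 1) s1 := by
  refine csSup_le (UU_set_nonempty hP n s) ?_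
  rintro x ⟨sch, hsch, rfl⟩
  rw [hrVal_rec hP hsch hq ht hc hf s n]
  refine add_le_add_right ?_ _
  calc ∑ a, sch ([], s) a * ∑ s1, P s a s1 *
        hrVal P (shiftSch sch s a) q t c f s1 (n + 1)
      ≤ ∑ a, sch ([], s) a * ∑ s1, P s (d s n) s1 * UU P q t c f (n + 1) s1 := by
        refine Finset.sum_le_sum (fun a _ => ?_)
        rcases eq_or_lt_of_le (hsch.1 ([], s) a) with h0 | h0
        · rw [← h0, zero_mul, zero_mul]
        · refine mul_le_mul_of_nonneg_left ?_ (le_of_lt h0)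
          refine le_trans (Finset.sum_le_sum (fun s1 _ => ?_))
            (hmax s n a (hsch.2.2 ([], s) a h0))
          exact mul_le_mul_of_nonneg_left
            (hrVal_le_UU hP (isHR_shift hsch a) hq ht hc hf s1 (n + 1)) (hP.1 s a s1)
    _ = (∑ a, sch ([], s) a) * ∑ s1, P s (d s n) s1 * UU P q t c f (n + 1) s1 :=
        (Finset.sum_mul _ _ _).symm
    _ = ∑ s1, P s (d s n) s1 * UU P q t c f (n + 1) s1 := by
        rw [hsch.2.1 ([], s), one_mul]

lemma UU_sub_cdVal_le {d : S → ℕ → A} (hP : IsDTMDP P) (hd : IsCD P d)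
    (hq : 0 < q) (ht : 0 ≤ t) (hc : ∀ s, 0 ≤ c s) (hf : ∀ s, 0 ≤ f s)
    (hmax : ∀ s n b, Enabled P s b →
      (∑ s1, P s b s1 * UU P q t c f (n + 1) s1) ≤
        ∑ s1, P s (d s n) s1 * UU P q t c f (n + 1) s1) :
    ∀ k n s, UU P q t c f n s - cdVal P d q t c f n s ≤ tailB q t c f (n + k) := by
  intro k
  induction k with
  | zero =>
    intro n s
    have h1 := UU_le_tailB hP hq ht hc hf n s
    have h2 := cdVal_nonneg (d := d) hP hq ht hc hf n s
    rw [Nat.add_zero]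
    linarith
  | succ k ih =>
    intro n s
    have hb := UU_bellman_le hP hq ht hc hf hmax n s
    have hr := cdVal_rec hP hd hq ht hc hf n s
    have key : UU P q t c f n s - cdVal P d q t c f n s ≤
        ∑ s1, P s (d s n) s1 * (UU P q t c f (n + 1) s1 - cdVal P d q t c f (n + 1) s1) := by
      have he : ∑ s1, P s (d s n) s1 *
          (UU P q t c f (n + 1) s1 - cdVal P d q t c f (n + 1) s1) =
          (∑ s1, P s (d s n) s1 * UU P q t c f (n + 1) s1) -
          ∑ s1, P s (d s n) s1 * cdVal P d q t c f (n + 1) s1 := by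
        rw [← Finset.sum_sub_distrib]
        exact Finset.sum_congr rfl (fun s1 _ => by ring)
      rw [he]
      linarith
    have step : ∑ s1, P s (d s n) s1 *
        (UU P q t c f (n + 1) s1 - cdVal P d q t c f (n + 1) s1) ≤
        ∑ s1, P s (d s n) s1 * tailB q t c f ((n + 1) + k) :=
      Finset.sum_le_sum (fun s1 _ =>
        mul_le_mul_of_nonneg_left (ih (n + 1) s1) (hP.1 s (d s n) s1))
    have mass : (∑ s1, P s (d s n) s1) = 1 := hd s n
    have : ∑ s1, P s (d s n) s1 * tailB q t c f ((n + 1) + k) =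
        tailB q t c f ((n + 1) + k) := by
      rw [← Finset.sum_mul, mass, one_mul]
    rw [show n + (k + 1) = (n + 1) + k from by ring]
    linarith
lemma UU_le_cdVal {d : S → ℕ → A} (hP : IsDTMDP P) (hd : IsCD P d)
    (hq : 0 < q) (ht : 0 ≤ t) (hc : ∀ s, 0 ≤ c s) (hf : ∀ s, 0 ≤ f s)
    (hmax : ∀ s n b, Enabled P s b →
      (∑ s1, P s b s1 * UU P q t c f (n + 1) s1) ≤
        ∑ s1, P s (d s n) s1 * UU P q t c f (n + 1) s1)
    (n : ℕ) (s : S) : UU P q t c f n s ≤ cdVal P d q t c f n s := by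
  have h1 := UU_sub_cdVal_le hP hd hq ht hc hf hmax
  have h2 : Filter.Tendsto (fun k => tailB q t c f (n + k)) Filter.atTop (nhds 0) := by
    have := tailB_tendsto (q := q) (t := t) (c := c) (f := f)
    have hcomp : Filter.Tendsto (fun k : ℕ => n + k) Filter.atTop Filter.atTop :=
      Filter.tendsto_atTop_mono (fun k => Nat.le_add_left k n) Filter.tendsto_id
    exact this.comp hcomp
  have h3 : UU P q t c f n s - cdVal P d q t c f n s ≤ 0 :=
    ge_of_tendsto' h2 (fun k => h1 k n s)
  linarith

end Aux6

section Aux7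
set_option linter.unusedSectionVars false
set_option maxHeartbeats 1000000
variable {S A : Type} [Fintype S] [Fintype A] [DecidableEq S] [DecidableEq A]
variable [Nonempty S]
variable {P : S → A → S → ℝ} {q t : ℝ} {c f : S → ℝ}

/-- The HR scheduler induced by the CD scheduler `d` with time offset `m`. -/
noncomputable def schCDo (d : S → ℕ → A) (m : ℕ) : List (S × A) × S → A → ℝ :=
  fun h a => if a = d h.2 (m + h.1.length) then 1 else 0

lemma isHR_schCDo {d : S → ℕ → A} (hd : IsCD P d) (m : ℕ) : IsHR P (schCDo d m) := by
  refine ⟨fun h a => ?_, fun h => ?_, fun h a ha => ?_⟩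
  · dsimp only [schCDo]; split <;> norm_num
  · simp [schCDo]
  · by_cases hh : a = d h.2 (m + h.1.length)
    · rw [hh]; exact hd _ _
    · simp [schCDo, hh] at ha

lemma shiftSch_schCDo (d : S → ℕ → A) (m : ℕ) (s0 : S) (a : A) :
    shiftSch (schCDo d m) s0 a = schCDo d (m + 1) := by
  funext h b
  simp only [shiftSch, schCDo, List.length_append, List.length_cons, List.length_nil]
  rw [show m + (h.1.length + (0 + 1)) = (m + 1) + h.1.length from by ring]

lemma hrProb_schCDo {d : S → ℕ → A} (hd : IsCD P d) :
    ∀ (i m : ℕ) (s0 s : S), hrProb P (schCDo d m) s0 i s = cdQ P d m s0 i s := by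
  intro i
  induction i with
  | zero => intro m s0 s; rw [hrProb_zero]; rfl
  | succ i ih =>
    intro m s0 s
    rw [hrProb_succ i s]
    have h1 : ∀ a : A, schCDo d m ([], s0) a = if a = d s0 m then (1:ℝ) else 0 := by
      intro a; simp [schCDo]
    calc ∑ a, schCDo d m ([], s0) a * ∑ s1, P s0 a s1 *
          hrProb P (shiftSch (schCDo d m) s0 a) s1 i s
        = ∑ a, (if a = d s0 m then (1:ℝ) else 0) * ∑ s1, P s0 a s1 *
            hrProb P (schCDo d (m + 1)) s1 i s := by
          refine Finset.sum_congr rfl (fun a _ => ?_)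
          rw [h1 a, shiftSch_schCDo]
      _ = ∑ s1, P s0 (d s0 m) s1 * hrProb P (schCDo d (m + 1)) s1 i s := by
          simp only [ite_mul, one_mul, zero_mul]
          rw [Finset.sum_ite_eq' Finset.univ (d s0 m)]
          simp
      _ = ∑ s1, P s0 (d s0 m) s1 * cdQ P d (m + 1) s1 i s := by
          exact Finset.sum_congr rfl (fun s1 _ => by rw [ih (m + 1) s1 s])
      _ = cdQ P d m s0 (i + 1) s := (cdQ_first m s0 i s).symm

end Aux7

/-- the supremum of the value over HR schedulers is attained by a
CD scheduler, simultaneously for every initial state. -/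
theorem stmt0 {S A : Type} [Fintype S] [Fintype A] [DecidableEq S] [DecidableEq A]
    (P : S → A → S → ℝ) (hP : IsDTMDP P)
    (q t : ℝ) (hq : 0 < q) (ht : 0 ≤ t)
    (c f : S → ℝ) (hc : ∀ s, 0 ≤ c s) (hf : ∀ s, 0 ≤ f s) :
    ∃ d : S → ℕ → A, IsCD P d ∧ ∀ s0 : S,
      value q t c f (cdProb P d s0) =
        ⨆ sch : {sch : List (S × A) × S → A → ℝ // IsHR P sch},
          value q t c f (hrProb P sch.1 s0) := by
  classical
  rcases isEmpty_or_nonempty S with hS | hS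
  · exact ⟨fun s _ => isEmptyElim s, fun s _ => isEmptyElim s, fun s0 => isEmptyElim s0⟩
  · haveI := hS
    obtain ⟨d, hd, hmax⟩ := exists_dstar (q := q) (t := t) (c := c) (f := f) hP
    refine ⟨d, hd, fun s0 => ?_⟩
    have hval_cd : value q t c f (cdProb P d s0) = cdVal P d q t c f 0 s0 := by
      rw [value_eq_tsum]
      unfold cdVal
      refine tsum_congr (fun i => Finset.sum_congr rfl (fun s _ => ?_))
      rw [cdProb_eq_cdQ s0 i, Nat.zero_add]
    have hub : ∀ sch : {sch : List (S × A) × S → A → ℝ // IsHR P sch},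
        value q t c f (hrProb P sch.1 s0) ≤ cdVal P d q t c f 0 s0 := by
      rintro ⟨sch, hsch⟩
      have h1 : value q t c f (hrProb P sch s0) = hrVal P sch q t c f s0 0 := by
        rw [value_eq_tsum]
        unfold hrVal
        exact tsum_congr (fun i => Finset.sum_congr rfl
          (fun s _ => by rw [Nat.zero_add]))
      rw [h1]
      exact le_trans (hrVal_le_UU hP hsch hq ht hc hf s0 0)
        (UU_le_cdVal hP hd hq ht hc hf hmax 0 s0)
    have hat : value q t c f (hrProb P (schCDo d 0) s0) = cdVal P d q t c f 0 s0 := by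
      rw [value_eq_tsum]
      unfold cdVal
      refine tsum_congr (fun i => Finset.sum_congr rfl (fun s _ => ?_))
      rw [hrProb_schCDo hd i 0 s0 s, Nat.zero_add]
    haveI hne : Nonempty {sch : List (S × A) × S → A → ℝ // IsHR P sch} :=
      ⟨⟨schCDo d 0, isHR_schCDo hd 0⟩⟩
    rw [hval_cd]
    refine le_antisymm ?_ (ciSup_le hub)
    rw [← hat]
    refine le_ciSup (f := fun sch : {sch : List (S × A) × S → A → ℝ // IsHR P sch} =>
      value q t c f (hrProb P sch.1 s0)) ?_ ⟨schCDo d 0, isHR_schCDo hd 0⟩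
    refine ⟨cdVal P d q t c f 0 s0, ?_⟩
    rintro x ⟨sch, rfl⟩
    exact hub sch

end TR
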